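/- If u : I → (0,∞) is a solution of the planar α-catenary equation α/u = ü/(1+u̇²) on an interval I, then there exists a constant μ > 0 such that 1 + u̇(t)² = μ·u(t)^{2α} for all t ∈ I. -/

import Mathlib

open Real Set

/-- If `u : I → (0,∞)` is a C² solution of the planar α-catenary equation
`α/u (1 + u̇²) = ü` on an open interval `I`, then there is a constant `μ > 0` with
`1 + u̇² = μ u^{2α}` on `I`. -/
theorem stmt6 (α a b : ℝ) (u : ℝ → ℝ)
    (hu : ContDiffOn ℝ 2 u (Ioo a b))
    (hpos : ∀ t ∈ Ioo a b, 0 < u t)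
    (heq : ∀ t ∈ Ioo a b,
      α / u t * (1 + (deriv u t) ^ 2) = deriv (deriv u) t) :
    ∃ μ : ℝ, 0 < μ ∧ ∀ t ∈ Ioo a b, 1 + (deriv u t) ^ 2 = μ * u t ^ (2 * α) := by
  rcases eq_empty_or_nonempty (Ioo a b) with he | ⟨t₀, ht₀⟩
  · exact ⟨1, one_pos, fun t ht => by rw [he] at ht; exact absurd ht (notMem_empty t)⟩
  have hO : IsOpen (Ioo a b) := isOpen_Ioo
  -- u' is C¹ on the open interval
  have hu' : ContDiffOn ℝ 1 (deriv u) (Ioo a b) :=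
    hu.deriv_of_isOpen hO (by norm_num)
  have hdu : ∀ t ∈ Ioo a b, HasDerivAt u (deriv u t) t := fun t ht =>
    ((hu.differentiableOn (by norm_num)).differentiableAt (hO.mem_nhds ht)).hasDerivAt
  have hddu : ∀ t ∈ Ioo a b, HasDerivAt (deriv u) (deriv (deriv u) t) t := fun t ht =>
    ((hu'.differentiableOn one_ne_zero).differentiableAt (hO.mem_nhds ht)).hasDerivAt
  set g : ℝ → ℝ := fun t => (1 + (deriv u t) ^ 2) * u t ^ (-(2 * α)) with hg
  have hgderiv : ∀ t ∈ Ioo a b, HasDerivAt g 0 t := by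
    intro t ht
    have hp := hpos t ht
    have h1 : HasDerivAt (fun s => 1 + (deriv u s) ^ 2)
        (2 * deriv u t * deriv (deriv u) t) t := by
      have := ((hddu t ht).pow 2).const_add 1
      refine this.congr_deriv ?_
      ring
    have h2 : HasDerivAt (fun s => u s ^ (-(2 * α)))
        (deriv u t * (-(2 * α)) * u t ^ (-(2 * α) - 1)) t :=
      (hdu t ht).rpow_const (Or.inl hp.ne')
    have h3 := h1.mul h2
    refine h3.congr_deriv ?_
    rw [← heq t ht, Real.rpow_sub_one hp.ne']
    field_simp
    ring
  have hconst : ∀ t ∈ Ioo a b, g t = g t₀ := by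
    intro t ht
    refine (convex_Ioo a b).is_const_of_fderivWithin_eq_zero
      (fun s hs => ((hgderiv s hs).differentiableAt).differentiableWithinAt)
      (fun s hs => ?_) ht ht₀
    rw [fderivWithin_of_isOpen hO hs, (hgderiv s hs).hasFDerivAt.fderiv]
    ext
    simp
  refine ⟨g t₀, ?_, ?_⟩
  · exact mul_pos (by positivity) (Real.rpow_pos_of_pos (hpos t₀ ht₀) _)
  · intro t ht
    have hp := hpos t ht
    rw [← hconst t ht]
    show 1 + deriv u t ^ 2 = (1 + deriv u t ^ 2) * u t ^ (-(2 * α)) * u t ^ (2 * α)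
    rw [Real.rpow_neg hp.le, mul_assoc,
      inv_mul_cancel₀ (Real.rpow_pos_of_pos hp _).ne', mul_one]
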